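/- Let α1, α2 ∈ (0,1] with γ := α1 + α2 > 1 and βi := √(αi(1−αi)), let T1 = (1/(2γ))·[[γ, 0, 0, −β1β2γ/(α1α2)], [0, γ−1, 0, −(γ−1)β1/α1], [0, 0, γ−1, −(γ−1)β2/α2], [−β1β2γ/(α1α2), −(γ−1)β1/α1, −(γ−1)β2/α2, 2−γ]], and let ψ be the vector (√((1−α1)(1−α2)), √((1−α1)α2), √(α1(1−α2)), √(α1α2))ᵀ ∈ ℂ⁴. Then T1 ψ = 0; in particular, Tr(ρ2 T1) = 0 where ρ2 = [[1−α1, β1],[β1, α1]] ⊗ [[1−α2, β2],[β2, α2]]. -/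

import Mathlib

open Matrix Kronecker ComplexOrder

noncomputable section

abbrev Mat (dA dB : ℕ) := Matrix (Fin dA × Fin dB) (Fin dA × Fin dB) ℂ

/-- The index identification `(a,b) ↦ 2a + b` of `Fin 2 × Fin 2` with `Fin 4`,
ordering the indices as (0,0),(0,1),(1,0),(1,1). -/
def idx4 : Fin 2 × Fin 2 → Fin 4 :=
  fun p => ⟨2 * p.1.val + p.2.val, by have := p.1.isLt; have := p.2.isLt; omega⟩

/-- View a `4×4` matrix as a matrix indexed by `Fin 2 × Fin 2` (in the order
(0,0),(0,1),(1,0),(1,1)). -/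
def toPair (M : Matrix (Fin 4) (Fin 4) ℂ) : Mat 2 2 :=
  Matrix.of fun p q => M (idx4 p) (idx4 q)

set_option maxHeartbeats 2000000 in
/-- `T1 ψ = 0`, and in particular `Tr(ρ2 T1) = 0`. -/
theorem T1_kernel (α1 α2 γ β1 β2 : ℝ)
    (hα1 : α1 ∈ Set.Ioc (0:ℝ) 1) (hα2 : α2 ∈ Set.Ioc (0:ℝ) 1)
    (hγ : γ = α1 + α2) (hγ1 : 1 < γ)
    (hβ1 : β1 = Real.sqrt (α1 * (1 - α1))) (hβ2 : β2 = Real.sqrt (α2 * (1 - α2)))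
    (T1 : Matrix (Fin 4) (Fin 4) ℂ)
    (hT1 : T1 = ((1 / (2 * γ)) •
      !![γ, 0, 0, -(β1 * β2 * γ / (α1 * α2));
         0, γ - 1, 0, -((γ - 1) * β1 / α1);
         0, 0, γ - 1, -((γ - 1) * β2 / α2);
         -(β1 * β2 * γ / (α1 * α2)), -((γ - 1) * β1 / α1), -((γ - 1) * β2 / α2), 2 - γ]
      : Matrix (Fin 4) (Fin 4) ℝ).map Complex.ofReal)
    (ψ : Fin 4 → ℂ)
    (hψ : ψ = fun i => ((![Real.sqrt ((1 - α1) * (1 - α2)), Real.sqrt ((1 - α1) * α2),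
      Real.sqrt (α1 * (1 - α2)), Real.sqrt (α1 * α2)] i : ℝ) : ℂ))
    (ρ2 : Mat 2 2)
    (hρ2 : ρ2 = (!![((1 - α1 : ℝ) : ℂ), (β1 : ℝ); (β1 : ℝ), (α1 : ℝ)]) ⊗ₖ
      (!![((1 - α2 : ℝ) : ℂ), (β2 : ℝ); (β2 : ℝ), (α2 : ℝ)])) :
    T1 *ᵥ ψ = 0 ∧ (ρ2 * toPair T1).trace = 0 := by
  obtain ⟨h1, h1'⟩ := hα1
  obtain ⟨h2, h2'⟩ := hα2
  set a := Real.sqrt α1 with ha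
  set b := Real.sqrt (1 - α1) with hb
  set c := Real.sqrt α2 with hc
  set d := Real.sqrt (1 - α2) with hd
  have ha2 : a^2 = α1 := Real.sq_sqrt h1.le
  have hb2 : b^2 = 1 - α1 := Real.sq_sqrt (by linarith)
  have hc2 : c^2 = α2 := Real.sq_sqrt h2.le
  have hd2 : d^2 = 1 - α2 := Real.sq_sqrt (by linarith)
  have ha0 : a > 0 := Real.sqrt_pos.2 h1
  have hc0 : c > 0 := Real.sqrt_pos.2 h2
  have hb2' : b^2 = 1 - a^2 := by rw [hb2, ha2]
  have hd2' : d^2 = 1 - c^2 := by rw [hd2, hc2]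
  have e1 : Real.sqrt (α1 * (1 - α1)) = a * b := Real.sqrt_mul h1.le _
  have e2 : Real.sqrt (α2 * (1 - α2)) = c * d := Real.sqrt_mul h2.le _
  have e3 : Real.sqrt ((1 - α1) * (1 - α2)) = b * d := Real.sqrt_mul (by linarith) _
  have e4 : Real.sqrt ((1 - α1) * α2) = b * c := Real.sqrt_mul (by linarith) _
  have e5 : Real.sqrt (α1 * (1 - α2)) = a * d := Real.sqrt_mul h1.le _
  have e6 : Real.sqrt (α1 * α2) = a * c := Real.sqrt_mul h1.le _
  subst hγ hβ1 hβ2 hT1 hψ hρ2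
  constructor
  · funext i
    fin_cases i <;>
      simp only [mulVec, dotProduct, Fin.sum_univ_four, Matrix.map_apply, Matrix.smul_apply,
        Matrix.cons_val', Matrix.cons_val_zero, Matrix.cons_val_one, Matrix.head_cons,
        Matrix.empty_val', Matrix.cons_val_fin_one, Matrix.head_fin_const, Pi.zero_apply,
        Matrix.cons_val_two, Matrix.cons_val_three, Matrix.tail_cons, smul_eq_mul,
        Matrix.cons_val_succ, Matrix.of_apply, e1, e2, e3, e4, e5, e6] <;>
      push_cast <;>
      rw [show (0:ℂ) = ((0:ℝ):ℂ) by norm_num] <;>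
      rw [show (2:ℂ) = ((2:ℝ):ℂ) by norm_num] <;>
      norm_cast <;>
      rw [← ha2, ← hc2] <;>
      first
        | (field_simp; ring_nf; rw [hb2', hd2']; ring)
        | (field_simp; ring)
  · have i00 : idx4 (0,0) = 0 := rfl
    have i01 : idx4 (0,1) = 1 := rfl
    have i10 : idx4 (1,0) = 2 := rfl
    have i11 : idx4 (1,1) = 3 := rfl
    simp only [Matrix.trace, Matrix.diag, Matrix.mul_apply, toPair, Matrix.of_apply,
      Fintype.sum_prod_type, Fin.sum_univ_two, kroneckerMap_apply,
      i00, i01, i10, i11, Matrix.map_apply, Matrix.smul_apply,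
      Matrix.cons_val', Matrix.cons_val_zero, Matrix.cons_val_one, Matrix.head_cons,
      Matrix.empty_val', Matrix.cons_val_fin_one, Matrix.head_fin_const,
      Matrix.cons_val_two, Matrix.cons_val_three, Matrix.tail_cons, smul_eq_mul,
      Matrix.cons_val_succ, e1, e2]
    push_cast
    rw [show (0:ℂ) = ((0:ℝ):ℂ) by norm_num]
    rw [show (2:ℂ) = ((2:ℝ):ℂ) by norm_num]
    norm_cast
    rw [← ha2, ← hc2]
    field_simp
    ring_nf
    rw [hb2', hd2']
    ring
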